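/- If f: {0,1}^n → {0,1} is transitive, then its desensitized version f_DT: {0,1}^{3n} → {0,1}, defined by f_DT(x_1 x_2 x_3) = 1 iff f(x_1) = f(x_2) = f(x_3) = 1 and p_{x_1} = p_{x_2} = p_{x_3}, is transitive, where the group witnessing transitivity of f_DT is generated by S_3 permuting the three n-bit blocks and by diagonal actions (σ,σ,σ) for σ in the transitive group of f. -/

import Mathlib

/-- If `f : {0,1}^n → {0,1}` is transitive (invariant under a transitive group `T`), and
the certificate assignment `P : x ↦ p_x` is equivariant under `T`, then the desensitized
version `f_DT : {0,1}^{3n} → {0,1}`, defined by `f_DT(x₁x₂x₃) = 1` iff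
`f(x₁) = f(x₂) = f(x₃) = 1` and `p_{x₁} = p_{x₂} = p_{x₃}`, is transitive; the witnessing
group is generated by `S_3` permuting the three blocks together with diagonal actions
`(σ,σ,σ)` for `σ ∈ T`. -/
theorem desensitized_transform_transitive (n : ℕ)
    (f : (Fin n → Bool) → Bool)
    (P : (Fin n → Bool) → (Fin n → Option Bool))
    (T : Subgroup (Equiv.Perm (Fin n)))
    (hT : ∀ i j : Fin n, ∃ σ ∈ T, σ i = j)
    (hf : ∀ σ ∈ T, ∀ x : Fin n → Bool, f (x ∘ σ) = f x)
    (hP : ∀ σ ∈ T, ∀ x : Fin n → Bool, P (x ∘ σ) = (P x) ∘ σ) :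
    ∃ G : Subgroup (Equiv.Perm (Fin 3 × Fin n)),
      G = Subgroup.closure
        ({π : Equiv.Perm (Fin 3 × Fin n) |
            ∃ ρ : Equiv.Perm (Fin 3), π = Equiv.prodCongr ρ (Equiv.refl (Fin n))} ∪
         {π : Equiv.Perm (Fin 3 × Fin n) |
            ∃ σ ∈ T, π = Equiv.prodCongr (Equiv.refl (Fin 3)) σ}) ∧
      (∀ p q : Fin 3 × Fin n, ∃ π ∈ G, π p = q) ∧
      (∀ π ∈ G, ∀ x : Fin 3 × Fin n → Bool,
        (decide ((∀ k : Fin 3, f (fun j => (x ∘ π) (k, j)) = true) ∧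
          (∀ k k' : Fin 3, P (fun j => (x ∘ π) (k, j)) = P (fun j => (x ∘ π) (k', j))))) =
        (decide ((∀ k : Fin 3, f (fun j => x (k, j)) = true) ∧
          (∀ k k' : Fin 3, P (fun j => x (k, j)) = P (fun j => x (k', j)))))) := by
  classical
  set S : Set (Equiv.Perm (Fin 3 × Fin n)) :=
    ({π : Equiv.Perm (Fin 3 × Fin n) |
        ∃ ρ : Equiv.Perm (Fin 3), π = Equiv.prodCongr ρ (Equiv.refl (Fin n))} ∪
     {π : Equiv.Perm (Fin 3 × Fin n) |
        ∃ σ ∈ T, π = Equiv.prodCongr (Equiv.refl (Fin 3)) σ}) with hS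
  refine ⟨Subgroup.closure S, rfl, ?_, ?_⟩
  · -- transitivity
    rintro ⟨a, i⟩ ⟨b, j⟩
    obtain ⟨σ, hσT, hσ⟩ := hT i j
    refine ⟨Equiv.prodCongr (Equiv.swap a b) (Equiv.refl (Fin n)) *
        Equiv.prodCongr (Equiv.refl (Fin 3)) σ, ?_, ?_⟩
    · exact mul_mem (Subgroup.subset_closure (Or.inl ⟨Equiv.swap a b, rfl⟩))
        (Subgroup.subset_closure (Or.inr ⟨σ, hσT, rfl⟩))
    · simp [Equiv.swap_apply_left, hσ]
  · -- invariance
    intro π hπ x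
    revert x
    refine Subgroup.closure_induction ?_ ?_ ?_ ?_ hπ
    · rintro π (⟨ρ, rfl⟩ | ⟨σ, hσT, rfl⟩) x
      · refine decide_eq_decide.mpr ?_
        constructor
        · rintro ⟨h1, h2⟩
          refine ⟨fun k => ?_, fun k k' => ?_⟩
          · have := h1 (ρ.symm k)
            simpa using this
          · have := h2 (ρ.symm k) (ρ.symm k')
            simpa using this
        · rintro ⟨h1, h2⟩
          exact ⟨fun k => by simpa using h1 (ρ k), fun k k' => by simpa using h2 (ρ k) (ρ k')⟩
      · refine decide_eq_decide.mpr ?_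
        have key : ∀ k : Fin 3, (fun j => (x ∘ Equiv.prodCongr (Equiv.refl (Fin 3)) σ) (k, j))
            = (fun j => x (k, j)) ∘ σ := by
          intro k; funext j; simp [Function.comp]
        have hcomp : ∀ g h : Fin n → Option Bool, g ∘ ⇑σ = h ∘ ⇑σ ↔ g = h := by
          intro g h
          constructor
          · intro hgh
            funext j
            have := congrFun hgh (σ.symm j)
            simpa using this
          · intro hgh; rw [hgh]
        constructor
        · rintro ⟨h1, h2⟩
          refine ⟨fun k => ?_, fun k k' => ?_⟩
          · have := h1 k; rw [key k, hf σ hσT] at this; exact this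
          · have := h2 k k'
            rw [key k, key k', hP σ hσT, hP σ hσT, hcomp] at this
            exact this
        · rintro ⟨h1, h2⟩
          refine ⟨fun k => ?_, fun k k' => ?_⟩
          · rw [key k, hf σ hσT]; exact h1 k
          · rw [key k, key k', hP σ hσT, hP σ hσT, hcomp]; exact h2 k k'
    · intro x; rfl
    · intro π₁ π₂ _ _ h1 h2 x
      have e : x ∘ ⇑(π₁ * π₂) = (x ∘ ⇑π₁) ∘ ⇑π₂ := rfl
      rw [e, h2 (x ∘ ⇑π₁), h1 x]
    · intro π _ h x
      have := h (x ∘ ⇑π⁻¹)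
      have e : (x ∘ ⇑π⁻¹) ∘ ⇑π = x := by
        funext p; simp
      rw [e] at this
      exact this.symm
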